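/- Let M be a real 3×3 matrix with det M ≥ 0, and let μ₁ ≥ μ₂ ≥ μ₃ ≥ 0 be the eigenvalues of Mᵗ·M. Then Tr(R·M) ≤ √μ₁ + √μ₂ + √μ₃ for every R ∈ SO(3), and there exists R ∈ SO(3) for which equality holds; i.e. the maximum of τ_M over SO(3) equals √μ₁ + √μ₂ + √μ₃. -/

import Mathlib

open Matrix Polynomial

lemma charmatrix_diag' {n : Type*} [Fintype n] [DecidableEq n] {R : Type*} [CommRing R]
    (d : n → R) : charmatrix (diagonal d) = diagonal (fun i => X - C (d i)) := by
  ext i j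
  by_cases h : i = j
  · subst h; simp [charmatrix_apply_eq]
  · simp [charmatrix_apply_ne _ _ _ h, diagonal_apply_ne _ h]

lemma charpoly_orth_conj {n : Type*} [Fintype n] [DecidableEq n]
    (W : Matrix n n ℝ) (hW : W * Wᵀ = 1) (d : n → ℝ) :
    (W * diagonal d * Wᵀ).charpoly = ∏ i, (X - C (d i)) := by
  have hmap : (W.map (C : ℝ →+* ℝ[X])) * (Wᵀ.map C) = 1 := by
    rw [← Matrix.map_mul, hW, Matrix.map_one C C.map_zero C.map_one]
  have hcm : charmatrix (W * diagonal d * Wᵀ)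
      = (W.map C) * charmatrix (diagonal d) * (Wᵀ.map C) := by
    unfold charmatrix
    rw [mul_sub, sub_mul]
    congr 1
    · have hc : (scalar n) X * (Wᵀ.map (C : ℝ →+* ℝ[X])) = Wᵀ.map C * (scalar n) X :=
        scalar_commute X (fun r => Commute.all _ r) _
      rw [mul_assoc, hc, ← mul_assoc, hmap, one_mul]
    · simp only [RingHom.mapMatrix_apply, Matrix.map_mul]
  rw [Matrix.charpoly, hcm, det_mul, det_mul, mul_comm, ← mul_assoc, ← det_mul, ← Matrix.map_mul,
    mul_eq_one_comm.mp hW, Matrix.map_one C C.map_zero C.map_one, det_one, one_mul,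
    charmatrix_diag', det_diagonal]

/-- For det M ≥ 0, the maximum of τ_M over SO(3) is √μ₁ + √μ₂ + √μ₃. -/
theorem max_tauM_det_nonneg (M : Matrix (Fin 3) (Fin 3) ℝ) (hM : 0 ≤ M.det)
    (μ₁ μ₂ μ₃ : ℝ) (hμ : μ₁ ≥ μ₂ ∧ μ₂ ≥ μ₃ ∧ μ₃ ≥ 0)
    (hchar : (Mᵀ * M).charpoly = (X - C μ₁) * (X - C μ₂) * (X - C μ₃)) :
    (∀ R : Matrix (Fin 3) (Fin 3) ℝ, Rᵀ * R = 1 → R.det = 1 →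
      Matrix.trace (R * M) ≤ Real.sqrt μ₁ + Real.sqrt μ₂ + Real.sqrt μ₃) ∧
    (∃ R : Matrix (Fin 3) (Fin 3) ℝ, Rᵀ * R = 1 ∧ R.det = 1 ∧
      Matrix.trace (R * M) = Real.sqrt μ₁ + Real.sqrt μ₂ + Real.sqrt μ₃) := by
  classical
  have hPSD : (Mᵀ * M).PosSemidef := by
    have := Matrix.posSemidef_conjTranspose_mul_self M
    rwa [Matrix.conjTranspose_eq_transpose_of_trivial] at this
  have hS : (Mᵀ * M).IsHermitian := hPSD.1
  set ev : Fin 3 → ℝ := hS.eigenvalues with hevdef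
  have hev0 : ∀ i, 0 ≤ ev i := fun i => hPSD.eigenvalues_nonneg i
  set W : Matrix (Fin 3) (Fin 3) ℝ := (hS.eigenvectorUnitary : Matrix (Fin 3) (Fin 3) ℝ)
    with hWdef
  have hW1 : Wᵀ * W = 1 := by
    have h := (hS.eigenvectorUnitary).2
    rw [Matrix.mem_unitaryGroup_iff'] at h
    rwa [Matrix.star_eq_conjTranspose, Matrix.conjTranspose_eq_transpose_of_trivial] at h
  have hW2 : W * Wᵀ = 1 := mul_eq_one_comm.mp hW1
  have hspec : Mᵀ * M = W * diagonal ev * Wᵀ := by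
    have h := hS.spectral_theorem
    rw [Unitary.conjStarAlgAut_apply] at h
    rwa [Matrix.star_eq_conjTranspose, Matrix.conjTranspose_eq_transpose_of_trivial,
      show (RCLike.ofReal ∘ hS.eigenvalues : Fin 3 → ℝ) = ev by funext i; simp [hevdef]] at h
  -- the eigenvalue multiset is {μ₁, μ₂, μ₃}
  have hchar2 : ∏ i, (X - C (ev i)) = (X - C μ₁) * (X - C μ₂) * (X - C μ₃) := by
    rw [← charpoly_orth_conj W hW2 ev, ← hspec, hchar]
  have hms : (Finset.univ.val.map ev) = ({μ₁, μ₂, μ₃} : Multiset ℝ) := by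
    have h1 : ((Finset.univ.val.map ev).map (fun a : ℝ => X - C a)).prod
        = (({μ₁, μ₂, μ₃} : Multiset ℝ).map (fun a : ℝ => X - C a)).prod := by
      rw [Multiset.map_map]
      have hpr : (Multiset.map ((fun a => X - C a) ∘ ev) Finset.univ.val).prod
          = ∏ i, (X - C (ev i)) := rfl
      rw [hpr, hchar2]
      simp [Multiset.insert_eq_cons, mul_assoc]
    have h2 := congrArg Polynomial.roots h1
    rwa [Polynomial.roots_multiset_prod_X_sub_C, Polynomial.roots_multiset_prod_X_sub_C] at h2
  have hsum : ∑ i, Real.sqrt (ev i) = Real.sqrt μ₁ + Real.sqrt μ₂ + Real.sqrt μ₃ := by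
    have h := congrArg (fun m : Multiset ℝ => (m.map Real.sqrt).sum) hms
    simp only [Multiset.map_map, Multiset.insert_eq_cons, Multiset.map_cons,
      Multiset.map_singleton, Multiset.sum_cons, Multiset.sum_singleton] at h
    calc ∑ i, Real.sqrt (ev i) = (Multiset.map (Real.sqrt ∘ ev) Finset.univ.val).sum := rfl
      _ = Real.sqrt μ₁ + Real.sqrt μ₂ + Real.sqrt μ₃ := by rw [h]; ring
  -- columns of M * W
  set Cm : Matrix (Fin 3) (Fin 3) ℝ := M * W with hCmdef
  have hCC : Cmᵀ * Cm = diagonal ev := by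
    rw [hCmdef, transpose_mul]
    calc Wᵀ * Mᵀ * (M * W) = Wᵀ * (Mᵀ * M) * W := by
          simp only [mul_assoc]
      _ = diagonal ev := by
          rw [hspec]
          simp only [← mul_assoc, hW1, one_mul]
          rw [mul_assoc, hW1, mul_one]
  have hcol : ∀ i j, ∑ k, Cm k i * Cm k j = diagonal ev i j := by
    intro i j
    have h := congrFun (congrFun hCC i) j
    simpa [Matrix.mul_apply, Matrix.transpose_apply] using h
  -- orthonormal columns where ev ≠ 0
  set v : Fin 3 → EuclideanSpace ℝ (Fin 3) :=
    fun i => WithLp.toLp 2 (fun k => (Real.sqrt (ev i))⁻¹ * Cm k i) with hvdef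
  have hsqrt_ne : ∀ i : Fin 3, ev i ≠ 0 → Real.sqrt (ev i) ≠ 0 := by
    intro i hi
    exact ne_of_gt (Real.sqrt_pos.mpr (lt_of_le_of_ne (hev0 i) (Ne.symm hi)))
  have hvon : Orthonormal ℝ (Set.restrict {i : Fin 3 | ev i ≠ 0} v) := by
    rw [orthonormal_iff_ite]
    rintro ⟨i, hi⟩ ⟨j, hj⟩
    have hinner : (inner ℝ (v i) (v j) : ℝ)
        = (Real.sqrt (ev i))⁻¹ * (Real.sqrt (ev j))⁻¹ * (diagonal ev i j) := by
      simp only [PiLp.inner_apply, RCLike.inner_apply, conj_trivial, hvdef]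
      rw [← hcol i j, Finset.mul_sum]
      exact Finset.sum_congr rfl fun k _ => by ring
    by_cases hij : i = j
    · subst hij
      simp only [Set.restrict, Set.restrict_apply, Set.domRestrict_apply, hinner, diagonal_apply_eq, Subtype.mk.injEq, if_true]
      have h2 : (Real.sqrt (ev i)) * (Real.sqrt (ev i)) = ev i := Real.mul_self_sqrt (hev0 i)
      have h3 := hsqrt_ne i hi
      field_simp
      linarith [h2]
    · simp only [Set.restrict, Set.restrict_apply, Set.domRestrict_apply, hinner, Subtype.mk.injEq]
      rw [diagonal_apply_ne _ hij, if_neg hij]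
      ring
  obtain ⟨b, hb⟩ := hvon.exists_orthonormalBasis_extension_of_card_eq
    (by simp [finrank_euclideanSpace])
  set U : Matrix (Fin 3) (Fin 3) ℝ := Matrix.of (fun k i => b i k) with hUdef
  have hU1 : Uᵀ * U = 1 := by
    ext i j
    have h := orthonormal_iff_ite.mp b.orthonormal i j
    simp only [PiLp.inner_apply, RCLike.inner_apply, conj_trivial] at h
    simpa [Matrix.mul_apply, Matrix.one_apply, hUdef, mul_comm] using h
  have hU2 : U * Uᵀ = 1 := mul_eq_one_comm.mp hU1
  have hCU : Cm = U * diagonal (fun i => Real.sqrt (ev i)) := by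
    ext k i
    rw [Matrix.mul_diagonal]
    by_cases hi : ev i = 0
    · have h0 : ∑ k, Cm k i * Cm k i = 0 := by
        rw [hcol]; simp [hi]
      have hz : Cm k i = 0 := by
        have := (Finset.sum_eq_zero_iff_of_nonneg
          (fun k _ => mul_self_nonneg (Cm k i))).mp h0 k (Finset.mem_univ k)
        exact mul_self_eq_zero.mp this
      simp [hz, hi]
    · have hbi : b i = v i := hb i hi
      have hsne := hsqrt_ne i hi
      rw [hUdef]
      show Cm k i = b i k * Real.sqrt (ev i)
      rw [hbi, hvdef]
      show Cm k i = (Real.sqrt (ev i))⁻¹ * Cm k i * Real.sqrt (ev i)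
      field_simp
  have hMdecomp : M = U * diagonal (fun i => Real.sqrt (ev i)) * Wᵀ := by
    rw [← hCU, hCmdef, mul_assoc, hW2, mul_one]
  constructor
  · -- upper bound
    intro R hR hRdet
    set Q : Matrix (Fin 3) (Fin 3) ℝ := Wᵀ * R * U with hQdef
    have hQQ : Q * Qᵀ = 1 := by
      rw [hQdef]
      simp only [transpose_mul, transpose_transpose]
      calc Wᵀ * R * U * (Uᵀ * (Rᵀ * W)) = Wᵀ * (R * (U * Uᵀ) * Rᵀ) * W := by
            simp only [mul_assoc]
        _ = 1 := by rw [hU2, mul_one, mul_eq_one_comm.mp hR, mul_one, hW1]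
    have hdiag : ∀ i, Q i i ≤ 1 := by
      intro i
      have h1 : ∑ j, Q i j * Q i j = 1 := by
        have h := congrFun (congrFun hQQ i) i
        simpa [Matrix.mul_apply, Matrix.one_apply] using h
      have h2 : Q i i * Q i i ≤ 1 := by
        rw [← h1]
        exact Finset.single_le_sum (fun j _ => mul_self_nonneg (Q i j)) (Finset.mem_univ i)
      nlinarith
    have htr : Matrix.trace (R * M) = ∑ i, Q i i * Real.sqrt (ev i) := by
      rw [hMdecomp]
      have : R * (U * diagonal (fun i => Real.sqrt (ev i)) * Wᵀ)
          = (R * U * diagonal (fun i => Real.sqrt (ev i))) * Wᵀ := by simp only [mul_assoc]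
      rw [this, Matrix.trace_mul_comm]
      rw [show Wᵀ * (R * U * diagonal (fun i => Real.sqrt (ev i)))
        = Q * diagonal (fun i => Real.sqrt (ev i)) by rw [hQdef]; simp only [mul_assoc]]
      rw [Matrix.trace]
      exact Finset.sum_congr rfl fun i _ => by rw [Matrix.diag_apply, Matrix.mul_diagonal]
    rw [htr, ← hsum]
    exact Finset.sum_le_sum fun i _ =>
      mul_le_of_le_one_left (Real.sqrt_nonneg _) (hdiag i)
  · -- attainment
    have hdetW : W.det * W.det = 1 := by
      have := congrArg Matrix.det hW1
      rwa [det_mul, det_transpose, det_one] at this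
    have hdetU : U.det * U.det = 1 := by
      have := congrArg Matrix.det hU1
      rwa [det_mul, det_transpose, det_one] at this
    have hdetM : M.det = (U.det * W.det) * ∏ i, Real.sqrt (ev i) := by
      rw [hMdecomp, det_mul, det_mul, det_diagonal, det_transpose]; ring
    by_cases he : U.det * W.det = 1
    · refine ⟨W * Uᵀ, ?_, ?_, ?_⟩
      · simp only [transpose_mul, transpose_transpose]
        calc U * Wᵀ * (W * Uᵀ) = U * (Wᵀ * W) * Uᵀ := by simp only [mul_assoc]
          _ = 1 := by rw [hW1, mul_one, hU2]
      · rw [det_mul, det_transpose, mul_comm]; exact he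
      · rw [hMdecomp]
        calc Matrix.trace (W * Uᵀ * (U * diagonal (fun i => Real.sqrt (ev i)) * Wᵀ))
            = Matrix.trace (W * (Uᵀ * U) * diagonal (fun i => Real.sqrt (ev i)) * Wᵀ) := by
              simp only [mul_assoc]
          _ = Matrix.trace (Wᵀ * (W * (Uᵀ * U) * diagonal (fun i => Real.sqrt (ev i)))) := by
              rw [Matrix.trace_mul_comm]
          _ = Matrix.trace (diagonal (fun i => Real.sqrt (ev i))) := by
              rw [hU1, mul_one]
              rw [show Wᵀ * (W * diagonal (fun i => Real.sqrt (ev i)))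
                = (Wᵀ * W) * diagonal (fun i => Real.sqrt (ev i)) by simp only [mul_assoc]]
              rw [hW1, one_mul]
          _ = Real.sqrt μ₁ + Real.sqrt μ₂ + Real.sqrt μ₃ := by
              rw [Matrix.trace_diagonal, hsum]
    · -- det U * det W = -1, so some singular value vanishes
      have he' : U.det * W.det = -1 := by
        rcases mul_self_eq_one_iff.mp hdetU with h | h <;>
        rcases mul_self_eq_one_iff.mp hdetW with h' | h' <;>
          simp [h, h'] at he ⊢ <;> tauto
      have hprod0 : ∏ i, Real.sqrt (ev i) = 0 := by
        have h1 : 0 ≤ ∏ i, Real.sqrt (ev i) :=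
          Finset.prod_nonneg fun i _ => Real.sqrt_nonneg _
        rw [hdetM, he'] at hM
        linarith
      obtain ⟨j, _, hj⟩ := Finset.prod_eq_zero_iff.mp hprod0
      set F : Matrix (Fin 3) (Fin 3) ℝ := diagonal (fun i => if i = j then (-1:ℝ) else 1)
        with hFdef
      have hFt : Fᵀ = F := diagonal_transpose _
      have hFF : F * F = 1 := by
        rw [hFdef, diagonal_mul_diagonal]
        convert diagonal_one using 2
        funext i
        by_cases h : i = j <;> simp [h]
      have hFdet : F.det = -1 := by
        rw [hFdef, det_diagonal]
        rw [Finset.prod_ite_eq' Finset.univ j (fun _ => (-1:ℝ))]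
        simp
      refine ⟨W * F * Uᵀ, ?_, ?_, ?_⟩
      · simp only [transpose_mul, transpose_transpose, hFt]
        calc U * (F * Wᵀ) * (W * F * Uᵀ) = U * (F * (Wᵀ * W) * F) * Uᵀ := by
              simp only [mul_assoc]
          _ = 1 := by rw [hW1, mul_one, hFF, mul_one, hU2]
      · rw [det_mul, det_mul, det_transpose, hFdet]
        nlinarith [he']
      · rw [hMdecomp]
        calc Matrix.trace (W * F * Uᵀ * (U * diagonal (fun i => Real.sqrt (ev i)) * Wᵀ))
            = Matrix.trace (W * (F * (Uᵀ * U) * diagonal (fun i => Real.sqrt (ev i))) * Wᵀ) := by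
              simp only [mul_assoc]
          _ = Matrix.trace (Wᵀ * (W * (F * (Uᵀ * U) * diagonal (fun i => Real.sqrt (ev i))))) := by
              rw [Matrix.trace_mul_comm]
          _ = Matrix.trace (F * diagonal (fun i => Real.sqrt (ev i))) := by
              rw [hU1, mul_one]
              rw [show Wᵀ * (W * (F * diagonal (fun i => Real.sqrt (ev i))))
                = (Wᵀ * W) * (F * diagonal (fun i => Real.sqrt (ev i))) by simp only [mul_assoc]]
              rw [hW1, one_mul]
          _ = ∑ i, Real.sqrt (ev i) := by
              rw [hFdef, diagonal_mul_diagonal, Matrix.trace_diagonal]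
              refine Finset.sum_congr rfl fun i _ => ?_
              by_cases h : i = j
              · subst h; simp [hj]
              · simp [h]
          _ = Real.sqrt μ₁ + Real.sqrt μ₂ + Real.sqrt μ₃ := hsum
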